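/- For an alphabet of size n ≥ 2, write l = 3^m · l₁ with l₁ ≥ 2, gcd(3, l₁) = 1, m ≥ 0. If l₁ is odd, then ε₂(n,l) = n^{3l} − n^l − π_n(3l); if l₁ is even, then ε₂(n,l) = n^{3l} − n^l − π_n(3l) − π_n(3l/2). Here ε₂(n,l) = Σ_{d ∈ Λ(l)} π_n(3l/d) with Λ(l) = {d : d | l, 3 ∤ d, d ≥ 4}. -/

import Mathlib

variable {A : Type*}

/-- k-fold concatenation of a word with itself. -/
def pw (w : List A) : ℕ → List A
  | 0 => []
  | n + 1 => w ++ pw w n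

/-- A nonempty word is primitive if it is not a proper power. -/
def Primitive (w : List A) : Prop :=
  w ≠ [] ∧ ∀ (v : List A) (m : ℕ), w = pw v m → m = 1

lemma pw_nil (k : ℕ) : pw ([] : List A) k = [] := by
  induction k <;> simp [pw, *]

lemma pw_zero (w : List A) : pw w 0 = [] := rfl

lemma pw_succ (w : List A) (k : ℕ) : pw w (k + 1) = w ++ pw w k := rfl

lemma pw_one (w : List A) : pw w 1 = w := by simp [pw]

lemma length_pw (w : List A) (k : ℕ) : (pw w k).length = k * w.length := by
  induction k with
  | zero => simp [pw]
  | succ k ih => simp [pw, ih]; ring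

lemma pw_add (w : List A) (a b : ℕ) : pw w (a + b) = pw w a ++ pw w b := by
  induction a with
  | zero => simp [pw]
  | succ a ih => rw [Nat.succ_add, pw_succ, pw_succ, ih, List.append_assoc]

lemma pw_comm_self (w : List A) (k : ℕ) : pw w k ++ w = w ++ pw w k := by
  induction k with
  | zero => simp [pw]
  | succ k ih => rw [pw_succ, List.append_assoc, ih]

lemma pw_mul (w : List A) (a b : ℕ) : pw w (a * b) = pw (pw w a) b := by
  induction b with
  | zero => simp [pw]
  | succ b ih => rw [Nat.mul_succ, pw_add, ih, pw_succ, pw_comm_self]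

/-- words commuting with `t`, of length divisible by `t.length`, are powers of `t`. -/
lemma comm_pw (t : List A) (ht : t ≠ []) :
    ∀ n (s : List A), s.length = n → t ++ s = s ++ t → t.length ∣ s.length →
      s = pw t (s.length / t.length) := by
  intro n
  induction n using Nat.strong_induction_on with
  | _ n ih =>
    intro s hn hc hd
    rcases eq_or_ne s [] with rfl | hs
    · simp [pw]
    · have hlt : 0 < t.length := List.length_pos_iff.2 ht
      have hsl : 0 < s.length := List.length_pos_iff.2 hs
      have hle : t.length ≤ s.length := Nat.le_of_dvd hsl hd
      have hpre : t <+: s := by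
        apply List.prefix_of_prefix_length_le _ (List.prefix_append s t) hle
        rw [← hc]; exact List.prefix_append t s
      obtain ⟨s', rfl⟩ := hpre
      have hc' : t ++ s' = s' ++ t := by
        rw [List.append_assoc] at hc
        exact List.append_cancel_left hc
      have hd' : t.length ∣ s'.length := by
        have : s'.length = (t ++ s').length - t.length := by simp
        rw [this]
        exact Nat.dvd_sub hd dvd_rfl
      have hlen : s'.length < n := by
        rw [← hn]; simp; omega
      have hrec := ih s'.length hlen s' rfl hc' hd'
      have hq : (t ++ s').length / t.length = s'.length / t.length + 1 := by
        simp only [List.length_append]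
        rw [Nat.add_comm t.length s'.length, Nat.add_div_right _ hlt]
      rw [hq, pw_succ, ← hrec]

lemma rotate_pw (u : List A) (a : ℕ) (ha : 1 ≤ a) :
    (pw u a).rotate u.length = pw u a := by
  obtain ⟨b, rfl⟩ := Nat.exists_eq_add_of_le ha
  rw [pw_add, pw_one]
  rw [List.rotate_eq_drop_append_take (by simp)]
  rw [List.drop_left, List.take_left]
  exact (pw_comm_self u b)

lemma take_pw (r : List A) (j k : ℕ) (h : j ≤ k) :
    (pw r k).take (j * r.length) = pw r j := by
  obtain ⟨c, rfl⟩ := Nat.exists_eq_add_of_le h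
  rw [pw_add, ← length_pw, List.take_left]

lemma exists_primitive_root : ∀ n (w : List A), w.length = n → w ≠ [] →
    ∃ u k, Primitive u ∧ 1 ≤ k ∧ w = pw u k := by
  intro n
  induction n using Nat.strong_induction_on with
  | _ n ih =>
    intro w hn hw
    by_cases hp : Primitive w
    · exact ⟨w, 1, hp, le_refl 1, (pw_one w).symm⟩
    · rw [Primitive, not_and] at hp
      push_neg at hp
      obtain ⟨v, m, hvm, hm⟩ := hp hw
      have hm0 : m ≠ 0 := by rintro rfl; exact hw hvm
      have hv : v ≠ [] := by rintro rfl; rw [pw_nil] at hvm; exact hw hvm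
      have hm2 : 2 ≤ m := by omega
      have hvl : v.length < n := by
        have := length_pw v m
        rw [← hvm, hn] at this
        have h1 : 0 < v.length := List.length_pos_iff.2 hv
        nlinarith
      obtain ⟨u, k, hu, hk, hvu⟩ := ih v.length hvl v rfl hv
      exact ⟨u, k * m, hu, Nat.mul_pos hk (by omega), by rw [pw_mul, ← hvu, hvm]⟩

lemma primitive_root_unique {u v : List A} {a b : ℕ} (hu : Primitive u) (hv : Primitive v)
    (ha : 1 ≤ a) (hb : 1 ≤ b) (h : pw u a = pw v b) : u = v := by
  obtain ⟨w, hw⟩ : ∃ w, w = pw u a := ⟨_, rfl⟩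
  have hwv : w = pw v b := hw.trans h
  have hul : 0 < u.length := List.length_pos_iff.2 hu.1
  have hvl : 0 < v.length := List.length_pos_iff.2 hv.1
  have hwl : 0 < w.length := by rw [hw, length_pw]; positivity
  have hex : ∃ p, 0 < p ∧ w.rotate p = w := ⟨w.length, hwl, w.rotate_length⟩
  classical
  have hg : ∃ g, g = Nat.find hex := ⟨_, rfl⟩
  obtain ⟨g, hg⟩ := hg
  obtain ⟨hg0, hgrot⟩ : 0 < g ∧ w.rotate g = w := hg ▸ Nat.find_spec hex
  have hdvd : ∀ p, w.rotate p = w → g ∣ p := by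
    intro p hp
    have hr : w.rotate (p % g) = w := by
      have hmul : ∀ q, w.rotate (g * q) = w := by
        intro q; induction q with
        | zero => simp
        | succ q ihq => rw [Nat.mul_succ, ← List.rotate_rotate, ihq, hgrot]
      calc w.rotate (p % g) = (w.rotate (g * (p / g))).rotate (p % g) := by rw [hmul]
        _ = w.rotate (g * (p / g) + p % g) := List.rotate_rotate _ _ _
        _ = w := by rw [Nat.div_add_mod]; exact hp
    by_contra hnd
    have hpg : 0 < p % g := Nat.pos_of_ne_zero fun h0 => hnd (Nat.dvd_of_mod_eq_zero h0)
    have hle' : Nat.find hex ≤ p % g := Nat.find_le ⟨hpg, hr⟩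
    rw [← hg] at hle'
    have := Nat.mod_lt p hg0
    omega
  have hgw : g ∣ w.length := hdvd _ w.rotate_length
  have hgu : g ∣ u.length := hdvd _ (by rw [hw]; exact rotate_pw u a ha)
  have hgv : g ∣ v.length := hdvd _ (by rw [hwv]; exact rotate_pw v b hb)
  have hgle : g ≤ w.length := Nat.le_of_dvd hwl hgw
  set t := w.take g with htdef
  have htl : t.length = g := by rw [htdef, List.length_take]; omega
  have ht : t ≠ [] := by intro h0; rw [h0] at htl; simp at htl; omega
  -- w = pw t (w.length / g)
  have hsplit : t ++ w.drop g = w.drop g ++ t := by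
    have h1 : t ++ w.drop g = w := List.take_append_drop g w
    have h2 : w.drop g ++ t = w := by
      rw [← List.rotate_eq_drop_append_take hgle]; exact hgrot
    rw [h1, h2]
  have hds : t.length ∣ (w.drop g).length := by
    rw [htl, List.length_drop]; exact Nat.dvd_sub hgw dvd_rfl
  have hrec := comm_pw t ht _ (w.drop g) rfl hsplit hds
  have h2 : (w.drop g).length / g + 1 = w.length / g := by
    rw [List.length_drop]
    obtain ⟨c, hc⟩ := hgw
    rw [hc]
    rw [Nat.mul_div_cancel_left _ hg0]
    have h3 : g * c - g = g * (c - 1) := by cases c <;> simp [Nat.mul_succ]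
    rw [h3, Nat.mul_div_cancel_left _ hg0]
    have hc1 : 1 ≤ c := by
      rcases Nat.eq_zero_or_pos c with rfl | hcc
      · rw [hc] at hwl; simp at hwl
      · exact hcc
    omega
  have hrec' : w.drop g = pw t ((w.drop g).length / g) := by rw [htl] at hrec; exact hrec
  have hwpow : w = pw t (w.length / g) := by
    rw [← h2, pw_add, pw_one, ← hrec', htdef]
    rw [← List.rotate_eq_drop_append_take hgle, hgrot]
  -- u = pw t (u.length / g)
  have key : ∀ (x : List A) (c : ℕ), Primitive x → 1 ≤ c → w = pw x c → x = t := by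
    intro x c hx hc hxc
    have hgx : g ∣ x.length := hdvd _ (by rw [hxc]; exact rotate_pw x c hc)
    have hxw : x.length ≤ w.length := by
      rw [hxc, length_pw]
      have h1 : 0 < x.length := List.length_pos_iff.2 hx.1
      nlinarith
    have hj : x.length / g ≤ w.length / g := Nat.div_le_div_right hxw
    have hxt : x = pw t (x.length / g) := by
      have h1 : x = w.take x.length := by
        obtain ⟨c', rfl⟩ := Nat.exists_eq_add_of_le hc
        rw [hxc, pw_add, pw_one, List.take_left' rfl]
      have h2 : x.length = x.length / g * g := (Nat.div_mul_cancel hgx).symm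
      have h3 := take_pw t (x.length / g) (w.length / g) hj
      rw [htl, ← h2, ← hwpow] at h3
      exact h1.trans h3
    have := hx.2 t _ hxt
    rw [hxt, this, pw_one]
  rw [key u a hu ha hw, key v b hv hb hwv]

/-- Number of primitive words of length k over an n-letter alphabet. -/
noncomputable def piw (n k : ℕ) : ℕ :=
  Nat.card {w : List (Fin n) // w.length = k ∧ Primitive w}

/-- ε₂(n,l) = Σ_{d ∈ Λ(l)} π_n(3l/d). -/
noncomputable def eps2S (n l : ℕ) : ℕ :=
  ∑ d ∈ l.divisors.filter (fun d => 4 ≤ d ∧ ¬ 3 ∣ d), piw n (3 * l / d)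

lemma nat_card_sigma {ι : Type*} [Fintype ι] (f : ι → Type*) [∀ i, Finite (f i)] :
    Nat.card (Σ i, f i) = ∑ i, Nat.card (f i) := by
  classical
  haveI : ∀ i, Fintype (f i) := fun i => Fintype.ofFinite (f i)
  simp [Nat.card_eq_fintype_card]

instance fintypeWords (n k : ℕ) : Fintype {w : List (Fin n) // w.length = k} :=
  inferInstanceAs (Fintype (List.Vector (Fin n) k))

lemma card_words (n k : ℕ) : Nat.card {w : List (Fin n) // w.length = k} = n ^ k := by
  rw [Nat.card_eq_fintype_card]
  have h : Fintype.card {w : List (Fin n) // w.length = k}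
      = Fintype.card (List.Vector (Fin n) k) := rfl
  rw [h, card_vector, Fintype.card_fin]

instance finitePrim (n k : ℕ) : Finite {w : List (Fin n) // w.length = k ∧ Primitive w} := by
  apply Finite.of_injective
    (fun x => (⟨x.1, x.2.1⟩ : {w : List (Fin n) // w.length = k}))
  intro x y hxy
  simp only [Subtype.mk.injEq] at hxy
  exact Subtype.ext hxy

lemma sum_piw (n k : ℕ) (hk : k ≠ 0) : ∑ d ∈ k.divisors, piw n d = n ^ k := by
  classical
  rw [← card_words n k]
  have hbij : Nat.card (Σ d : {d // d ∈ k.divisors},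
      {w : List (Fin n) // w.length = d.1 ∧ Primitive w})
      = Nat.card {w : List (Fin n) // w.length = k} := by
    have hlen : ∀ (d : {d // d ∈ k.divisors})
        (v : {w : List (Fin n) // w.length = d.1 ∧ Primitive w}),
        (pw v.1 (k / d.1)).length = k := by
      rintro ⟨d, hd⟩ ⟨v, hv, hp⟩
      obtain ⟨hdvd, -⟩ := Nat.mem_divisors.1 hd
      rw [length_pw, hv]
      exact Nat.div_mul_cancel hdvd
    have hpos : ∀ d : {d // d ∈ k.divisors}, 1 ≤ k / d.1 := by
      rintro ⟨d, hd⟩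
      obtain ⟨hdvd, -⟩ := Nat.mem_divisors.1 hd
      have hd0 : 0 < d := Nat.pos_of_mem_divisors hd
      exact Nat.div_pos (Nat.le_of_dvd (Nat.pos_of_ne_zero hk) hdvd) hd0
    apply Nat.card_eq_of_bijective (fun x => ⟨pw x.2.1 (k / x.1.1), hlen x.1 x.2⟩)
    constructor
    · rintro ⟨⟨d, hd⟩, ⟨v, hv, hp⟩⟩ ⟨⟨d', hd'⟩, ⟨v', hv', hp'⟩⟩ hxy
      have heq : pw v (k / d) = pw v' (k / d') := congrArg Subtype.val hxy
      have hvv : v = v' :=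
        primitive_root_unique hp hp' (hpos ⟨d, hd⟩) (hpos ⟨d', hd'⟩) heq
      have hv2 : v.length = d := hv
      have hv2' : v'.length = d' := hv'
      have hdd : d = d' := by rw [← hv2, ← hv2', hvv]
      subst hdd
      subst hvv
      rfl
    · rintro ⟨w, hwk⟩
      have hw : w ≠ [] := by
        intro h0
        rw [h0] at hwk
        exact hk hwk.symm
      obtain ⟨u, j, hu, hj, hwu⟩ := exists_primitive_root w.length w rfl hw
      have hlu : 0 < u.length := List.length_pos_iff.2 hu.1
      have hk' : k = j * u.length := by rw [← hwk, hwu, length_pw]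
      have hdvd : u.length ∣ k := ⟨j, by rw [hk', Nat.mul_comm]⟩
      have hmem : u.length ∈ k.divisors := Nat.mem_divisors.2 ⟨hdvd, hk⟩
      refine ⟨⟨⟨u.length, hmem⟩, ⟨u, rfl, hu⟩⟩, ?_⟩
      apply Subtype.ext
      show pw u (k / u.length) = w
      rw [hk', Nat.mul_div_cancel _ hlu, ← hwu]

  rw [← hbij, nat_card_sigma]
  rw [← Finset.sum_coe_sort k.divisors (fun d => piw n d)]
  rfl
theorem eps2S_formula (n l m l₁ : ℕ) (hn : 2 ≤ n) (hl : l = 3 ^ m * l₁)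
    (hl₁ : 2 ≤ l₁) (hgcd : Nat.gcd 3 l₁ = 1) :
    (Odd l₁ → (eps2S n l : ℤ) = (n : ℤ) ^ (3 * l) - (n : ℤ) ^ l - (piw n (3 * l) : ℤ)) ∧
    (Even l₁ → (eps2S n l : ℤ) =
        (n : ℤ) ^ (3 * l) - (n : ℤ) ^ l - (piw n (3 * l) : ℤ) - (piw n (3 * l / 2) : ℤ)) := by
  classical
  have h3 : ¬ 3 ∣ l₁ := by
    intro h
    have h1 : 3 ∣ Nat.gcd 3 l₁ := Nat.dvd_gcd dvd_rfl h
    rw [hgcd] at h1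
    exact absurd (Nat.le_of_dvd one_pos h1) (by omega)
  have hl₁0 : l₁ ≠ 0 := by omega
  have hl0 : l ≠ 0 := by
    rw [hl]
    exact Nat.mul_ne_zero (by positivity) hl₁0
  have h3l0 : 3 * l ≠ 0 := by omega
  have hll : l₁ ∣ l := Dvd.intro_left _ hl.symm
  -- coprimality helper
  have hcop : ∀ d : ℕ, ¬ 3 ∣ d → ∀ j : ℕ, Nat.Coprime d (3 ^ j) := fun d hd j =>
    Nat.Coprime.pow_right j (Nat.coprime_comm.mp ((Nat.prime_three.coprime_iff_not_dvd).2 hd))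
  -- Step A: the filtered set of divisors of l equals filtered divisors of l₁
  have hfilter : l.divisors.filter (fun d => 4 ≤ d ∧ ¬ 3 ∣ d)
      = l₁.divisors.filter (fun d => 4 ≤ d) := by
    ext d
    simp only [Finset.mem_filter, Nat.mem_divisors]
    constructor
    · rintro ⟨⟨hdl, -⟩, h4, h3d⟩
      refine ⟨⟨?_, hl₁0⟩, h4⟩
      rw [hl] at hdl
      exact (hcop d h3d m).dvd_of_dvd_mul_left hdl
    · rintro ⟨⟨hdl, -⟩, h4⟩
      exact ⟨⟨hdl.trans hll, hl0⟩, h4, fun hh => h3 (hh.trans hdl)⟩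
  -- Step B: image of l₁.divisors under d ↦ 3l/d is (3l).divisors \ l.divisors
  have h3l : 3 * l = 3 ^ (m + 1) * l₁ := by rw [hl, pow_succ]; ring
  have himg : l₁.divisors.image (fun d => 3 * l / d) = (3 * l).divisors \ l.divisors := by
    ext e
    simp only [Finset.mem_image, Finset.mem_sdiff, Nat.mem_divisors]
    constructor
    · rintro ⟨d, hd, rfl⟩
      obtain ⟨hdl₁, -⟩ := hd
      have hd3l : d ∣ 3 * l := (hdl₁.trans hll).trans (dvd_mul_left l 3)
      have heq : 3 * l / d = 3 ^ (m + 1) * (l₁ / d) := by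
        rw [h3l, Nat.mul_div_assoc _ hdl₁]
      refine ⟨⟨Nat.div_dvd_of_dvd hd3l, h3l0⟩, ?_⟩
      rintro ⟨hdvd, -⟩
      have h31 : 3 ^ (m + 1) ∣ l := dvd_trans (heq ▸ Dvd.intro (l₁ / d) rfl) hdvd
      rw [hl, pow_succ] at h31
      have : 3 ∣ l₁ := (Nat.mul_dvd_mul_iff_left (Nat.pow_pos (n := m) (by norm_num))).1 h31
      exact h3 this
    · rintro ⟨⟨he, -⟩, hne⟩
      have hnel : ¬ e ∣ l := fun h => hne ⟨h, hl0⟩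
      have he0 : e ≠ 0 := by rintro rfl; exact h3l0 (Nat.eq_zero_of_zero_dvd he)
      refine ⟨3 * l / e, ?_, Nat.div_div_self he h3l0⟩
      have hmul : e * (3 * l / e) = 3 * l := Nat.mul_div_cancel' he
      have h3d : ¬ 3 ∣ (3 * l / e) := by
        rintro ⟨c, hc⟩
        apply hnel
        refine ⟨c, ?_⟩
        have : e * (3 * c) = 3 * l := by rw [← hc, hmul]
        have h3' : 3 * (e * c) = 3 * l := by rw [← this]; ring
        exact (Nat.eq_of_mul_eq_mul_left (by norm_num) h3').symm
      have hdvd3l : (3 * l / e) ∣ 3 ^ (m + 1) * l₁ := by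
        rw [← h3l]; exact Nat.div_dvd_of_dvd he
      exact ⟨(hcop _ h3d (m + 1)).dvd_of_dvd_mul_left hdvd3l, hl₁0⟩
  -- injectivity of d ↦ 3l/d on divisors of l₁
  have hinj : ∀ x ∈ l₁.divisors, ∀ y ∈ l₁.divisors,
      3 * l / x = 3 * l / y → x = y := by
    intro x hx y hy hxy
    have hx' : x ∣ 3 * l := ((Nat.mem_divisors.1 hx).1.trans hll).trans (dvd_mul_left l 3)
    have hy' : y ∣ 3 * l := ((Nat.mem_divisors.1 hy).1.trans hll).trans (dvd_mul_left l 3)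
    rw [← Nat.div_div_self hx' h3l0, hxy, Nat.div_div_self hy' h3l0]
  -- Step C: sum over divisors of l₁
  have hsum : ∑ d ∈ l₁.divisors, piw n (3 * l / d) + n ^ l = n ^ (3 * l) := by
    have h1 : ∑ d ∈ l₁.divisors, piw n (3 * l / d)
        = ∑ e ∈ (3 * l).divisors \ l.divisors, piw n e := by
      rw [← himg, Finset.sum_image hinj]
    have hsub : l.divisors ⊆ (3 * l).divisors :=
      Nat.divisors_subset_of_dvd h3l0 (dvd_mul_left l 3)
    have h2 := Finset.sum_sdiff (f := fun e => piw n e) hsub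
    rw [h1, ← sum_piw n l hl0, ← sum_piw n (3 * l) h3l0]
    exact h2
  -- Step D: split off small divisors
  have hsplit := Finset.sum_filter_add_sum_filter_not l₁.divisors (fun d => 4 ≤ d)
      (fun d => piw n (3 * l / d))
  have heps : eps2S n l = ∑ d ∈ l₁.divisors.filter (fun d => 4 ≤ d), piw n (3 * l / d) := by
    rw [eps2S, hfilter]
  constructor
  · intro hodd
    have h2 : ¬ 2 ∣ l₁ := by rw [Nat.odd_iff] at hodd; omega
    have hsmall : l₁.divisors.filter (fun d => ¬ 4 ≤ d) = {1} := by
      ext d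
      simp only [Finset.mem_filter, Nat.mem_divisors, Finset.mem_singleton]
      constructor
      · rintro ⟨⟨hd, -⟩, h4⟩
        have hd0 : d ≠ 0 := by rintro rfl; exact hl₁0 (Nat.eq_zero_of_zero_dvd hd)
        have hd3 : d ≠ 3 := by rintro rfl; exact h3 hd
        have hd2 : d ≠ 2 := by rintro rfl; exact h2 hd
        omega
      · rintro rfl
        exact ⟨⟨one_dvd _, hl₁0⟩, by omega⟩
    have hkey : eps2S n l + piw n (3 * l) + n ^ l = n ^ (3 * l) := by
      rw [heps, ← hsum, ← hsplit, hsmall, Finset.sum_singleton, Nat.div_one]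
    have := congrArg (fun x : ℕ => (x : ℤ)) hkey
    push_cast at this
    linarith
  · intro heven
    have h2 : 2 ∣ l₁ := by rwa [← even_iff_two_dvd]
    have hsmall : l₁.divisors.filter (fun d => ¬ 4 ≤ d) = {1, 2} := by
      ext d
      simp only [Finset.mem_filter, Nat.mem_divisors, Finset.mem_insert, Finset.mem_singleton]
      constructor
      · rintro ⟨⟨hd, -⟩, h4⟩
        have hd0 : d ≠ 0 := by rintro rfl; exact hl₁0 (Nat.eq_zero_of_zero_dvd hd)
        have hd3 : d ≠ 3 := by rintro rfl; exact h3 hd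
        omega
      · rintro (rfl | rfl)
        · exact ⟨⟨one_dvd _, hl₁0⟩, by omega⟩
        · exact ⟨⟨h2, hl₁0⟩, by omega⟩
    have hkey : eps2S n l + (piw n (3 * l) + piw n (3 * l / 2)) + n ^ l = n ^ (3 * l) := by
      rw [heps, ← hsum, ← hsplit, hsmall]
      rw [Finset.sum_insert (by simp), Finset.sum_singleton, Nat.div_one]
    have := congrArg (fun x : ℕ => (x : ℤ)) hkey
    push_cast at this
    linarith
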